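/- Let g be of type A_n with adapted ι, and suppose for some k both conditions (1) k < n and ι^{(k)} > ι^{(k+1)}, and (2) k > 1 and ι^{(k)} > ι^{(k-1)} hold. Then λ^{(k)} = [1, 2, ..., k−1, k+1]^A_{−P(k−1)} + ⟨λ, h_k⟩, i.e., the defining linear form λ^{(k)} = −x_{1,k} + x_{1,k−1} + x_{1,k+1} + ⟨λ, h_k⟩ equals the column tableau function Σ_{i=1}^{k−1} box^A_i(−P(k−1)+k−i) + box^A_{k+1}(−P(k−1)) plus ⟨λ, h_k⟩. -/

import Mathlib

/-! Combinatorics of an adapted sequence `ι` for a classical Lie algebra, and the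
column-tableau linear forms of Kanakubo–Nakashima in re-indexed coordinates `x_{m,j}`
(the coordinate for the `m`-th occurrence of the index `j` in `ι`). -/

noncomputable section

/-- First position `m ≥ 1` with `ι m ∈ {i, j}`. -/
def firstBoth (ι : ℕ → ℕ) (i j : ℕ) : ℕ := sInf {m | 1 ≤ m ∧ (ι m = i ∨ ι m = j)}

/-- `p_{i,j} = 1` if `i` occurs before `j` in `ι`, and `0` otherwise. -/
def pOf (ι : ℕ → ℕ) (i j : ℕ) : ℕ := if ι (firstBoth ι i j) = i then 1 else 0

/-- `ι⁽ⁱ⁾`, the first position of `ι` at which `i` occurs. -/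
def firstOcc (ι : ℕ → ℕ) (i : ℕ) : ℕ := sInf {m | 1 ≤ m ∧ ι m = i}

/-- `P(k) = p_{2,1} + p_{3,2} + ⋯ + p_{k,k-1}` (so `P 0 = P 1 = 0`). -/
def Pof (ι : ℕ → ℕ) (k : ℕ) : ℕ := ∑ i ∈ Finset.Icc 2 k, pOf ι i (i - 1)

/-- The condition that every index `1,…,n` occurs infinitely often in `ι` and
consecutive entries of `ι` differ. -/
def SeqCond (n : ℕ) (ι : ℕ → ℕ) : Prop :=
  (∀ m, 1 ≤ m → 1 ≤ ι m ∧ ι m ≤ n) ∧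
  (∀ m, 1 ≤ m → ι m ≠ ι (m + 1)) ∧
  (∀ i, 1 ≤ i → i ≤ n → ∀ N : ℕ, ∃ m, N < m ∧ ι m = i)

/-- `ι` is adapted to the type `A_n` Cartan matrix: for adjacent indices `i, j`, any two
consecutive members of the subsequence of `ι` consisting of `i`'s and `j`'s differ. -/
def AdaptedA (n : ℕ) (ι : ℕ → ℕ) : Prop :=
  ∀ i j : ℕ, 1 ≤ i → i ≤ n → 1 ≤ j → j ≤ n → (i = j + 1 ∨ j = i + 1) →
    ∀ m m' : ℕ, 1 ≤ m → m < m' → (ι m = i ∨ ι m = j) → (ι m' = i ∨ ι m' = j) →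
      (∀ r, m < r → r < m' → ι r ≠ i ∧ ι r ≠ j) → ι m ≠ ι m'

/-- Linear forms on `ℚ^∞`, presented by their coefficients in the re-indexed
coordinates `x_{m,j}`. -/
abbrev LinF : Type := ℤ × ℕ → ℚ

/-- The coordinate functional `x_{m,j}` (zero when `m ≤ 0`, `j = 0` or `j > n`). -/
def XT (n : ℕ) (m : ℤ) (j : ℕ) : LinF :=
  fun q => if q = (m, j) ∧ 1 ≤ m ∧ 1 ≤ j ∧ j ≤ n then 1 else 0

/-- The box `⌈j⌉^A_s = x_{s+P(j),j} − x_{s+P(j−1)+1,j−1}` of type `A_n`. -/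
def boxA (n : ℕ) (ι : ℕ → ℕ) (j : ℕ) (s : ℤ) : LinF :=
  XT n (s + (Pof ι j : ℤ)) j - XT n (s + (Pof ι (j - 1) : ℤ) + 1) (j - 1)

/-- The column tableau `[j₁,…,j_k]^A_s = Σ_{i=1}^k ⌈j_i⌉^A_{s+k−i}` (here `j` is
`0`-indexed: `j ⟨0⟩ = j₁, …`). -/
def tabA (n : ℕ) (ι : ℕ → ℕ) {k : ℕ} (j : Fin k → ℕ) (s : ℤ) : LinF :=
  ∑ i : Fin k, boxA n ι (j i) (s + (k : ℤ) - 1 - ((i : ℕ) : ℤ))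

/-- The Nakashima–Zelevinsky form `β_{m,j}` in re-indexed coordinates, for `ι` adapted
to a type `A` Cartan matrix:
`β_{m,j} = x_{m,j} + x_{m+1,j} − x_{m+p_{j−1,j},j−1} − x_{m+p_{j+1,j},j+1}`. -/
def betaA (n : ℕ) (ι : ℕ → ℕ) (m : ℤ) (j : ℕ) : LinF :=
  XT n m j + XT n (m + 1) j - XT n (m + (pOf ι (j - 1) j : ℤ)) (j - 1)
    - XT n (m + (pOf ι (j + 1) j : ℤ)) (j + 1)

/-- Affine-linear forms: a constant term together with a linear form. -/
abbrev AffF : Type := ℚ × LinF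

/-- The form `β⁽⁻⁾_{m,j}` in re-indexed coordinates: `β_{m−1,j}` when `m ≥ 2`, and the
`λ`-dependent form with constant term `−⟨h_j, λ⟩` when `m = 1`. -/
def betaMA (n : ℕ) (ι : ℕ → ℕ) (lam : ℕ → ℤ) (m : ℤ) (j : ℕ) : AffF :=
  ((if m = 1 then -(lam j : ℚ) else 0), betaA n ι (m - 1) j)

/-- The operator `Ŝ_{m,j}` of the polyhedral realization of `B(λ)` in re-indexed
coordinates. -/
def ShatA (n : ℕ) (ι : ℕ → ℕ) (lam : ℕ → ℤ) (m : ℤ) (j : ℕ) (φ : AffF) : AffF :=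
  if 0 < φ.2 (m, j) then φ - φ.2 (m, j) • (((0 : ℚ), betaA n ι m j) : AffF)
  else φ - φ.2 (m, j) • betaMA n ι lam m j

end

lemma firstBoth_comm' (ι : ℕ → ℕ) (i j : ℕ) : firstBoth ι i j = firstBoth ι j i := by
  simp only [firstBoth]
  congr 1
  ext m
  simp only [Set.mem_setOf_eq]
  tauto

lemma firstBoth_val' (n : ℕ) (ι : ℕ → ℕ) (hseq : SeqCond n ι) (i j : ℕ)
    (hj1 : 1 ≤ j) (hjn : j ≤ n) (h : firstOcc ι j < firstOcc ι i) :
    ι (firstBoth ι i j) = j := by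
  obtain ⟨m, hm, hmj⟩ := hseq.2.2 j hj1 hjn 0
  have hSj : ({m | 1 ≤ m ∧ ι m = j} : Set ℕ).Nonempty := ⟨m, hm, hmj⟩
  have hmemj : firstOcc ι j ∈ {m | 1 ≤ m ∧ ι m = j} := Nat.sInf_mem hSj
  have hS : ({m | 1 ≤ m ∧ (ι m = i ∨ ι m = j)} : Set ℕ).Nonempty :=
    ⟨firstOcc ι j, hmemj.1, Or.inr hmemj.2⟩
  have hmem : firstBoth ι i j ∈ {m | 1 ≤ m ∧ (ι m = i ∨ ι m = j)} := Nat.sInf_mem hS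
  have hle : firstBoth ι i j ≤ firstOcc ι j :=
    Nat.sInf_le ⟨hmemj.1, Or.inr hmemj.2⟩
  rcases hmem.2 with hi | hjj
  · exfalso
    have : firstOcc ι i ≤ firstBoth ι i j := Nat.sInf_le ⟨hmem.1, hi⟩
    omega
  · exact hjj

lemma XT_col_zero' (n : ℕ) (t : ℤ) : XT n t 0 = 0 := by
  funext q
  simp [XT]

lemma tele' (n : ℕ) (ι : ℕ → ℕ) : ∀ (r : ℕ) (t : ℤ),
    (∑ i : Fin r, boxA n ι ((i : ℕ) + 1) (t + (r : ℤ) - 1 - ((i : ℕ) : ℤ)))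
      = XT n (t + (Pof ι r : ℤ)) r := by
  intro r
  induction r with
  | zero =>
      intro t
      simp only [Finset.univ_eq_empty, Finset.sum_empty]
      rw [show ((Pof ι 0 : ℤ)) = 0 by simp [Pof], add_zero, XT_col_zero']
  | succ r ih =>
      intro t
      rw [Fin.sum_univ_castSucc]
      have h1 : (∑ i : Fin r, boxA n ι (((i.castSucc : Fin (r+1)) : ℕ) + 1)
          (t + ((r + 1 : ℕ) : ℤ) - 1 - (((i.castSucc : Fin (r+1)) : ℕ) : ℤ)))
          = XT n (t + 1 + (Pof ι r : ℤ)) r := by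
        rw [← ih (t + 1)]
        apply Finset.sum_congr rfl
        intro i _
        simp only [Fin.coe_castSucc]
        congr 1
        push_cast
        ring
      rw [h1]
      have h2 : t + ((r + 1 : ℕ) : ℤ) - 1 - (((Fin.last r : Fin (r+1)) : ℕ) : ℤ) = t := by
        simp [Fin.val_last]; push_cast; ring
      rw [h2]
      show XT n (t + 1 + (Pof ι r : ℤ)) r + boxA n ι (r + 1) t = _
      rw [boxA]
      have h3 : (r + 1) - 1 = r := rfl
      rw [h3]
      have h4 : t + (Pof ι r : ℤ) + 1 = t + 1 + (Pof ι r : ℤ) := by ring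
      rw [h4]
      abel

/-- Type `A_n`, `ι` adapted, `1 < k < n` with both `ι⁽ᵏ⁾ > ι⁽ᵏ⁺¹⁾` and
`ι⁽ᵏ⁾ > ι⁽ᵏ⁻¹⁾`.  Then
`λ⁽ᵏ⁾ = −x_{1,k} + x_{1,k−1} + x_{1,k+1} + ⟨λ,h_k⟩` equals the column tableau function
`[1,2,…,k−1,k+1]^A_{−P(k−1)} + ⟨λ,h_k⟩`. -/
theorem lamk_eq_tableau (n : ℕ) (ι : ℕ → ℕ) (lam : ℕ → ℤ)
    (hseq : SeqCond n ι) (had : AdaptedA n ι)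
    (k : ℕ) (hk1 : 1 < k) (hkn : k < n)
    (h1 : firstOcc ι (k + 1) < firstOcc ι k)
    (h2 : firstOcc ι (k - 1) < firstOcc ι k) :
    (((lam k : ℚ), XT n 1 (k - 1) + XT n 1 (k + 1) - XT n 1 k) : AffF) =
      ((lam k : ℚ),
        tabA n ι (fun i : Fin k => if (i : ℕ) < k - 1 then (i : ℕ) + 1 else k + 1)
          (-(Pof ι (k - 1) : ℤ))) := by
  obtain ⟨r, rfl⟩ : ∃ r, k = r + 1 := ⟨k - 1, by omega⟩
  have hr1 : 1 ≤ r := by omega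
  -- p_{k,k-1} = 0 and p_{k+1,k} = 1
  have hp0 : pOf ι (r + 1) r = 0 := by
    have := firstBoth_val' n ι hseq (r + 1) r hr1 (by omega)
      (by simpa using h2)
    simp [pOf, this]
  have hp1 : pOf ι (r + 2) (r + 1) = 1 := by
    have := firstBoth_val' n ι hseq (r + 1) (r + 2) (by omega) (by omega)
      (by simpa using h1)
    rw [firstBoth_comm'] at this
    simp [pOf, this]
  have hPsucc : ∀ m : ℕ, 1 ≤ m → Pof ι (m + 1) = Pof ι m + pOf ι (m + 1) m := by
    intro m hm
    rw [Pof, Pof, Finset.sum_Icc_succ_top (by omega : 2 ≤ m + 1)]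
    simp
  have hPk : Pof ι (r + 1) = Pof ι r := by rw [hPsucc r hr1, hp0]; omega
  have hPk1 : Pof ι (r + 2) = Pof ι r + 1 := by
    rw [hPsucc (r + 1) (by omega), hp1, hPk]
  have hsub : r + 1 - 1 = r := rfl
  rw [Prod.mk.injEq]
  refine ⟨rfl, ?_⟩
  rw [tabA, hsub, Fin.sum_univ_castSucc]
  set s : ℤ := -(Pof ι r : ℤ) with hs
  have hmain : (∑ i : Fin r, boxA n ι
      (if ((i.castSucc : Fin (r + 1)) : ℕ) < r then ((i.castSucc : Fin (r + 1)) : ℕ) + 1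
        else r + 1 + 1)
      (s + ((r + 1 : ℕ) : ℤ) - 1 - (((i.castSucc : Fin (r + 1)) : ℕ) : ℤ)))
      = XT n (s + 1 + (Pof ι r : ℤ)) r := by
    rw [← tele' n ι r (s + 1)]
    apply Finset.sum_congr rfl
    intro i _
    simp only [Fin.coe_castSucc]
    rw [if_pos i.isLt]
    congr 1
    push_cast
    ring
  rw [hmain]
  have hlast : ((Fin.last r : Fin (r + 1)) : ℕ) = r := Fin.val_last r
  rw [hlast, if_neg (lt_irrefl r)]
  have harg : s + ((r + 1 : ℕ) : ℤ) - 1 - ((r : ℕ) : ℤ) = s := by push_cast; ring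
  rw [harg, boxA]
  have hsub2 : r + 1 + 1 - 1 = r + 1 := rfl
  rw [hsub2, hPk1, hPk]
  have e1 : s + 1 + (Pof ι r : ℤ) = 1 := by rw [hs]; ring
  have e2 : s + ((Pof ι r + 1 : ℕ) : ℤ) = 1 := by rw [hs]; push_cast; ring
  have e3 : s + (Pof ι r : ℤ) + 1 = 1 := by rw [hs]; ring
  rw [e1, e2, e3]
  abel
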